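/- Uhlmann-type correspondence for sub-normalized states: for sub-normalized states ρ₁, ρ₂ on A with purifications ρ₁^{AR₁}, ρ₂^{AR₂} (with dim R₁ ≤ dim R₂), there exists a partial isometry V : R₁ → R₂ such that P(ρ₁^A, ρ₂^A) = P((I_A ⊗ V) ρ₁^{AR₁} (I_A ⊗ V)†, ρ₂^{AR₂}). -/

import Mathlib

open Matrix ComplexOrder Kronecker
open scoped Classical

set_option linter.unusedSectionVars false
set_option maxHeartbeats 1000000

/-- Total positive-semidefinite square root: the PSD square root when the matrix is PSD,
and `0` otherwise. -/

noncomputable def msqrt {n : Type*} [Fintype n] [DecidableEq n] (ρ : Matrix n n ℂ) :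
    Matrix n n ℂ :=
  if h : ρ.PosSemidef then
    (h.1.eigenvectorUnitary : Matrix n n ℂ) *
      diagonal ((↑) ∘ (Real.sqrt ·) ∘ h.1.eigenvalues) * (star h.1.eigenvectorUnitary : Matrix n n ℂ)
  else 0

/-- Trace norm `‖M‖₁ = Tr √(M Mᴴ)`. -/
noncomputable def traceNorm {n : Type*} [Fintype n] [DecidableEq n] (M : Matrix n n ℂ) : ℝ :=
  ((msqrt (M * Mᴴ)).trace).re

/-- Fidelity `F(ρ,σ) = ‖√ρ √σ‖₁`. -/
noncomputable def fidelity {n : Type*} [Fintype n] [DecidableEq n] (ρ σ : Matrix n n ℂ) : ℝ :=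
  traceNorm (msqrt ρ * msqrt σ)

/-- Generalized fidelity `F̄(ρ,σ) = F(ρ,σ) + √((1 - Tr ρ)(1 - Tr σ))`. -/
noncomputable def genFid {n : Type*} [Fintype n] [DecidableEq n] (ρ σ : Matrix n n ℂ) : ℝ :=
  fidelity ρ σ + Real.sqrt ((1 - ρ.trace.re) * (1 - σ.trace.re))

/-- Purified distance `P(ρ,σ) = √(1 - F̄(ρ,σ)²)`. -/
noncomputable def pdist {n : Type*} [Fintype n] [DecidableEq n] (ρ σ : Matrix n n ℂ) : ℝ :=
  Real.sqrt (1 - (genFid ρ σ) ^ 2)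

/-- Marginal on `A` of an operator on `A ⊗ R` (partial trace over `R`). -/
noncomputable def margFst {a r : Type*} [Fintype a] [Fintype r]
    (ρ : Matrix (a × r) (a × r) ℂ) : Matrix a a ℂ :=
  Matrix.of fun i j => ∑ l : r, ρ (i, l) (j, l)

set_option linter.unusedSectionVars false
set_option maxHeartbeats 1000000

section Aux

variable {m n : Type*} [Fintype m] [Fintype n] [DecidableEq m] [DecidableEq n]

open scoped MatrixOrder in
lemma msqrt_eq_sqrt {A : Matrix n n ℂ} (hA : A.PosSemidef) : msqrt A = CFC.sqrt A := by
  rw [msqrt, dif_pos hA, CFC.sqrt_eq_cfc, cfc_nnreal_eq_real _ A hA.nonneg, hA.1.cfc_eq]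
  simp [IsHermitian.cfc, Unitary.conjStarAlgAut_apply, Function.comp_def,
    Real.coe_toNNReal _ (hA.eigenvalues_nonneg _), hA.eigenvalues_nonneg, max_eq_left]

open scoped MatrixOrder in
lemma msqrt_eq_of_sq {A B : Matrix n n ℂ} (hA : A.PosSemidef) (hB : B.PosSemidef)
    (h : B * B = A) : msqrt A = B := by
  rw [msqrt_eq_sqrt hA]
  exact CFC.sqrt_unique h hB.nonneg

lemma psd_BdB (B : Matrix m n ℂ) (d : n → ℝ) (hd : ∀ i, 0 ≤ d i) :
    (B * Matrix.diagonal (fun i => (d i : ℂ)) * Bᴴ).PosSemidef := by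
  have hdiag : (Matrix.diagonal (fun i => (d i : ℂ))).PosSemidef := by
    rw [Matrix.posSemidef_diagonal_iff]
    intro i
    exact_mod_cast hd i
  exact hdiag.mul_mul_conjTranspose_same B

lemma msqrt_BdB (B : Matrix m n ℂ) (hB : Bᴴ * B = 1) (d : n → ℝ) (hd : ∀ i, 0 ≤ d i) :
    msqrt (B * Matrix.diagonal (fun i => (d i : ℂ)) * Bᴴ)
      = B * Matrix.diagonal (fun i => (Real.sqrt (d i) : ℂ)) * Bᴴ := by
  refine msqrt_eq_of_sq (psd_BdB B d hd) (psd_BdB B _ (fun i => Real.sqrt_nonneg _)) ?_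
  calc B * Matrix.diagonal (fun i => (Real.sqrt (d i) : ℂ)) * Bᴴ *
        (B * Matrix.diagonal (fun i => (Real.sqrt (d i) : ℂ)) * Bᴴ)
      = B * (Matrix.diagonal (fun i => (Real.sqrt (d i) : ℂ)) * (Bᴴ * B) *
          Matrix.diagonal (fun i => (Real.sqrt (d i) : ℂ))) * Bᴴ := by
        simp only [Matrix.mul_assoc]
    _ = B * Matrix.diagonal (fun i => (d i : ℂ)) * Bᴴ := by
        rw [hB, Matrix.mul_one, Matrix.diagonal_mul_diagonal]
        have : (fun i => (Real.sqrt (d i) : ℂ) * (Real.sqrt (d i) : ℂ))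
            = fun i => ((d i : ℝ) : ℂ) := by
          funext j
          rw [← Complex.ofReal_mul, Real.mul_self_sqrt (hd j)]
        rw [this]

lemma trace_BdB (B : Matrix m n ℂ) (hB : Bᴴ * B = 1) (d : n → ℝ) :
    (B * Matrix.diagonal (fun i => (d i : ℂ)) * Bᴴ).trace = ((∑ i, d i : ℝ) : ℂ) := by
  rw [Matrix.trace_mul_cycle, hB, Matrix.one_mul, Matrix.trace_diagonal]
  push_cast
  rfl

end Aux

section SVD

variable {m n : Type*} [Fintype m] [Fintype n] [DecidableEq m] [DecidableEq n]

lemma exists_svd (A : Matrix m n ℂ) (hcard : Fintype.card n ≤ Fintype.card m) :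
    ∃ (B : Matrix m n ℂ) (C : Matrix n n ℂ) (s : n → ℝ),
      Bᴴ * B = 1 ∧ Cᴴ * C = 1 ∧ C * Cᴴ = 1 ∧ (∀ i, 0 ≤ s i) ∧
      A = B * Matrix.diagonal (fun i => (s i : ℂ)) * Cᴴ := by
  have hP : (Aᴴ * A).PosSemidef := Matrix.posSemidef_conjTranspose_mul_self A
  have hH : (Aᴴ * A).IsHermitian := hP.1
  set C : Matrix n n ℂ := (hH.eigenvectorUnitary : Matrix n n ℂ) with hC
  have hC1 : Cᴴ * C = 1 := by
    simpa [Matrix.star_eq_conjTranspose] using Unitary.star_mul_self_of_mem hH.eigenvectorUnitary.2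
  have hC2 : C * Cᴴ = 1 := by
    simpa [Matrix.star_eq_conjTranspose] using Unitary.mul_star_self_of_mem hH.eigenvectorUnitary.2
  set lam : n → ℝ := hH.eigenvalues with hlam
  have hlam0 : ∀ i, 0 ≤ lam i := hP.eigenvalues_nonneg
  set s : n → ℝ := fun i => Real.sqrt (lam i) with hs
  have hs0 : ∀ i, 0 ≤ s i := fun i => Real.sqrt_nonneg _
  have hssq : ∀ i, s i * s i = lam i := fun i => Real.mul_self_sqrt (hlam0 i)
  set G : Matrix m n ℂ := A * C with hG
  have hGG : Gᴴ * G = Matrix.diagonal (fun i => (lam i : ℂ)) := by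
    have := hH.conjStarAlgAut_star_eigenvectorUnitary
    rw [Unitary.conjStarAlgAut_star_apply, Matrix.star_eq_conjTranspose] at this
    calc Gᴴ * G = Cᴴ * (Aᴴ * A) * C := by
          rw [hG, Matrix.conjTranspose_mul]; simp only [Matrix.mul_assoc]
      _ = Matrix.diagonal (fun i => (lam i : ℂ)) := by rw [this]; rfl
  -- columns with zero eigenvalue vanish
  have hGcol : ∀ i, lam i = 0 → ∀ j, G j i = 0 := by
    intro i hi j
    have h1 : (Gᴴ * G) i i = (lam i : ℂ) := by rw [hGG, Matrix.diagonal_apply_eq]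
    have h2 : (Gᴴ * G) i i = ((∑ k, Complex.normSq (G k i) : ℝ) : ℂ) := by
      rw [Matrix.mul_apply]
      push_cast
      congr 1
      funext k
      rw [Matrix.conjTranspose_apply, Complex.normSq_eq_conj_mul_self]
      rfl
    have h3 : (∑ k, Complex.normSq (G k i) : ℝ) = 0 := by
      have := h1.symm.trans h2
      rw [hi] at this
      exact_mod_cast this.symm
    have h4 : Complex.normSq (G j i) = 0 := by
      have := (Finset.sum_eq_zero_iff_of_nonneg
        (fun k _ => Complex.normSq_nonneg (G k i))).mp h3 j (Finset.mem_univ j)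
      exact this
    exact Complex.normSq_eq_zero.mp h4
  -- embedding from cardinality
  obtain ⟨e⟩ : Nonempty (n ↪ m) := Function.Embedding.nonempty_of_card_le hcard
  -- normalized columns as Euclidean vectors
  set w : n → EuclideanSpace ℂ m := fun i => WithLp.toLp 2 (fun j => (((s i)⁻¹ : ℝ) : ℂ) * G j i) with hw
  have hinner : ∀ i i', (inner ℂ (w i) (w i') : ℂ)
      = (((s i)⁻¹ : ℝ) : ℂ) * (((s i')⁻¹ : ℝ) : ℂ) * (Gᴴ * G) i i' := by
    intro i i'
    rw [PiLp.inner_apply, Matrix.mul_apply, Finset.mul_sum]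
    congr 1
    funext k
    rw [Matrix.conjTranspose_apply]
    rw [RCLike.inner_apply]
    show ((((s i')⁻¹ : ℝ) : ℂ) * G k i') * (starRingEnd ℂ) ((((s i)⁻¹ : ℝ) : ℂ) * G k i) = _
    rw [_root_.map_mul, Complex.conj_ofReal, starRingEnd_apply]
    ring
  have hwnorm : ∀ i i', lam i ≠ 0 → lam i' ≠ 0 →
      (inner ℂ (w i) (w i') : ℂ) = if i = i' then (1:ℂ) else 0 := by
    intro i i' hi hi'
    rw [hinner, hGG]
    by_cases h : i = i'
    · subst h
      rw [if_pos rfl, Matrix.diagonal_apply_eq]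
      have hsne : s i ≠ 0 := fun h0 => hi (by rw [← hssq i, h0, mul_zero])
      push_cast
      field_simp
      rw [sq, ← Complex.ofReal_mul, hssq i]
    · rw [if_neg h, Matrix.diagonal_apply_ne _ h, mul_zero]
  -- the extension set
  set sset : Set m := {k | ∃ i, lam i ≠ 0 ∧ e i = k} with hsset
  set v : m → EuclideanSpace ℂ m := fun k =>
    if h : ∃ i, lam i ≠ 0 ∧ e i = k then w h.choose else 0 with hv
  have hve : ∀ i, lam i ≠ 0 → v (e i) = w i := by
    intro i hi
    have hex : ∃ i', lam i' ≠ 0 ∧ e i' = e i := ⟨i, hi, rfl⟩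
    rw [hv]
    simp only [dif_pos hex]
    have h1 : lam hex.choose ≠ 0 ∧ e hex.choose = e i := hex.choose_spec
    rw [e.injective h1.2]
  have honb : Orthonormal ℂ (sset.restrict v) := by
    rw [orthonormal_iff_ite]
    rintro ⟨k, i, hi, rfl⟩ ⟨k', i', hi', rfl⟩
    show inner ℂ (v (e i)) (v (e i')) = _
    rw [hve i hi, hve i' hi', hwnorm i i' hi hi']
    by_cases h : i = i'
    · subst h; simp
    · rw [if_neg h, if_neg (by simp only [ne_eq, Subtype.mk_eq_mk]; exact fun hc => h (e.injective hc))]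
  obtain ⟨b, hb⟩ := honb.exists_orthonormalBasis_extension_of_card_eq
    (by rw [finrank_euclideanSpace])
  set B : Matrix m n ℂ := Matrix.of (fun j i => (b (e i)) j) with hB
  have hBB : Bᴴ * B = 1 := by
    ext i i'
    rw [Matrix.mul_apply]
    have : ∑ j, (Bᴴ) i j * B j i' = (inner ℂ (b (e i)) (b (e i')) : ℂ) := by
      rw [PiLp.inner_apply]
      refine Finset.sum_congr rfl fun j _ => ?_
      rw [Matrix.conjTranspose_apply, RCLike.inner_apply, starRingEnd_apply]
      rw [mul_comm]
      rfl
    rw [this, orthonormal_iff_ite.mp b.orthonormal]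
    by_cases h : i = i'
    · subst h; simp
    · rw [if_neg (fun hc => h (e.injective hc)), Matrix.one_apply_ne h]
  have hAC : A * C = B * Matrix.diagonal (fun i => (s i : ℂ)) := by
    ext j i
    rw [Matrix.mul_diagonal]
    show G j i = B j i * ((s i : ℝ) : ℂ)
    by_cases hi : lam i = 0
    · rw [hGcol i hi j]
      have h0 : s i = 0 := by rw [hs]; simp [hi]
      rw [h0]
      push_cast; ring
    · have hbe : b (e i) = v (e i) := hb (e i) ⟨i, hi, rfl⟩
      have hBji : B j i = (((s i)⁻¹ : ℝ) : ℂ) * G j i := by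
        show (b (e i)) j = _
        rw [hbe, hve i hi]
      rw [hBji]
      have hsne : s i ≠ 0 := fun h0 => hi (by rw [← hssq i, h0, mul_zero])
      have hcne : ((s i : ℝ) : ℂ) ≠ 0 := by exact_mod_cast hsne
      rw [Complex.ofReal_inv]
      field_simp
  refine ⟨B, C, s, hBB, hC1, hC2, hs0, ?_⟩
  calc A = A * C * Cᴴ := by rw [Matrix.mul_assoc, hC2, Matrix.mul_one]
    _ = B * Matrix.diagonal (fun i => (s i : ℂ)) * Cᴴ := by rw [hAC]

end SVD

section Pack
variable {m n : Type*} [Fintype m] [Fintype n] [DecidableEq m] [DecidableEq n]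

lemma svd_package (A : Matrix m n ℂ) (hcard : Fintype.card n ≤ Fintype.card m) :
    ∃ (W : Matrix m n ℂ) (r : ℝ), 0 ≤ r ∧ Wᴴ * W = 1 ∧
      (msqrt (A * Aᴴ)).trace = (r : ℂ) ∧ (msqrt (Aᴴ * A)).trace = (r : ℂ) ∧
      (Wᴴ * A).trace = (r : ℂ) := by
  obtain ⟨B, C, s, hBB, hC1, hC2, hs0, hA⟩ := exists_svd A hcard
  set D := Matrix.diagonal (fun i => (s i : ℂ)) with hD
  have hDh : Dᴴ = D := by
    rw [hD, Matrix.diagonal_conjTranspose]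
    funext i j
    by_cases h : i = j
    · subst h
      rw [Matrix.diagonal_apply_eq, Matrix.diagonal_apply_eq, Pi.star_apply,
        Complex.star_def, Complex.conj_ofReal]
    · rw [Matrix.diagonal_apply_ne _ h, Matrix.diagonal_apply_ne _ h]
  have hDD : D * D = Matrix.diagonal (fun i => ((s i * s i : ℝ) : ℂ)) := by
    rw [hD, Matrix.diagonal_mul_diagonal]
    congr 1
    funext i
    push_cast
    ring
  have hsq : ∀ i, 0 ≤ s i * s i := fun i => mul_nonneg (hs0 i) (hs0 i)
  have hsqrt : (fun i => (Real.sqrt (s i * s i) : ℂ)) = fun i => (s i : ℂ) := by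
    funext i; rw [Real.sqrt_mul_self (hs0 i)]
  have h1 : A * Aᴴ = B * Matrix.diagonal (fun i => ((s i * s i : ℝ) : ℂ)) * Bᴴ := by
    calc A * Aᴴ = (B * D * Cᴴ) * (C * (Dᴴ * Bᴴ)) := by
          rw [hA]
          simp only [Matrix.conjTranspose_mul, Matrix.conjTranspose_conjTranspose]
      _ = B * (D * ((Cᴴ * C) * (Dᴴ * Bᴴ))) := by simp only [Matrix.mul_assoc]
      _ = B * Matrix.diagonal (fun i => ((s i * s i : ℝ) : ℂ)) * Bᴴ := by
          rw [hC1, Matrix.one_mul, hDh, ← Matrix.mul_assoc D D Bᴴ, hDD, ← Matrix.mul_assoc]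
  have h2 : Aᴴ * A = C * Matrix.diagonal (fun i => ((s i * s i : ℝ) : ℂ)) * Cᴴ := by
    calc Aᴴ * A = (C * (Dᴴ * Bᴴ)) * (B * D * Cᴴ) := by
          rw [hA]
          simp only [Matrix.conjTranspose_mul, Matrix.conjTranspose_conjTranspose]
      _ = C * (Dᴴ * ((Bᴴ * B) * (D * Cᴴ))) := by simp only [Matrix.mul_assoc]
      _ = C * Matrix.diagonal (fun i => ((s i * s i : ℝ) : ℂ)) * Cᴴ := by
          rw [hBB, Matrix.one_mul, hDh, ← Matrix.mul_assoc D D Cᴴ, hDD, ← Matrix.mul_assoc]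
  have h3 : (B * Cᴴ)ᴴ * A = C * D * Cᴴ := by
    calc (B * Cᴴ)ᴴ * A = C * ((Bᴴ * B) * (D * Cᴴ)) := by
          rw [hA]
          simp only [Matrix.conjTranspose_mul, Matrix.conjTranspose_conjTranspose,
            Matrix.mul_assoc]
      _ = C * D * Cᴴ := by rw [hBB, Matrix.one_mul, Matrix.mul_assoc]
  refine ⟨B * Cᴴ, ∑ i, s i, Finset.sum_nonneg (fun i _ => hs0 i), ?_, ?_, ?_, ?_⟩
  · rw [Matrix.conjTranspose_mul, Matrix.conjTranspose_conjTranspose]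
    calc C * Bᴴ * (B * Cᴴ) = C * ((Bᴴ * B) * Cᴴ) := by simp only [Matrix.mul_assoc]
      _ = 1 := by rw [hBB, Matrix.one_mul, hC2]
  · rw [h1, msqrt_BdB B hBB _ hsq]
    rw [show (fun i => (Real.sqrt (s i * s i) : ℂ)) = fun i => (s i : ℂ) from hsqrt]
    exact trace_BdB B hBB s
  · rw [h2, msqrt_BdB C hC1 _ hsq]
    rw [show (fun i => (Real.sqrt (s i * s i) : ℂ)) = fun i => (s i : ℂ) from hsqrt]
    exact trace_BdB C hC1 s
  · rw [h3]
    exact trace_BdB C hC1 s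

lemma trace_msqrt_comm (A : Matrix m n ℂ) :
    (msqrt (A * Aᴴ)).trace = (msqrt (Aᴴ * A)).trace := by
  rcases le_total (Fintype.card n) (Fintype.card m) with h | h
  · obtain ⟨W, r, _, _, h1, h2, _⟩ := svd_package A h
    rw [h1, h2]
  · obtain ⟨W, r, _, _, h1, h2, _⟩ := svd_package Aᴴ h
    rw [Matrix.conjTranspose_conjTranspose] at h1 h2
    rw [h1, h2]




end Pack

section Rank1
variable {m n : Type*} [Fintype m] [Fintype n] [DecidableEq m] [DecidableEq n]

noncomputable def nsq {n : Type*} [Fintype n] (u : n → ℂ) : ℝ := ∑ i, Complex.normSq (u i)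

lemma nsq_nonneg (u : n → ℂ) : 0 ≤ nsq u :=
  Finset.sum_nonneg fun i _ => Complex.normSq_nonneg _

lemma star_dot_self (u : n → ℂ) : star u ⬝ᵥ u = ((nsq u : ℝ) : ℂ) := by
  rw [nsq, dotProduct]
  push_cast
  refine Finset.sum_congr rfl fun i _ => ?_
  rw [Complex.normSq_eq_conj_mul_self]
  rfl

lemma nsq_eq_zero {u : n → ℂ} (h : nsq u = 0) : u = 0 := by
  funext i
  have := (Finset.sum_eq_zero_iff_of_nonneg
    (fun k (_ : k ∈ Finset.univ) => Complex.normSq_nonneg (u k))).mp h i (Finset.mem_univ i)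
  exact Complex.normSq_eq_zero.mp this

lemma nsq_smul (c : ℝ) (u : n → ℂ) : nsq ((c : ℂ) • u) = c * c * nsq u := by
  rw [nsq, nsq, Finset.mul_sum]
  refine Finset.sum_congr rfl fun i _ => ?_
  simp only [Pi.smul_apply, smul_eq_mul, Complex.normSq_mul, Complex.normSq_ofReal]

lemma vecMulVec_mul (a b c d : n → ℂ) :
    vecMulVec a b * vecMulVec c d = (b ⬝ᵥ c) • vecMulVec a d := by
  ext i j
  rw [Matrix.mul_apply, Matrix.smul_apply, Matrix.vecMulVec_apply, dotProduct, smul_eq_mul,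
    Finset.sum_mul]
  refine Finset.sum_congr rfl fun k _ => ?_
  rw [Matrix.vecMulVec_apply, Matrix.vecMulVec_apply]
  ring

lemma vecMulVec_conjTranspose (x y : n → ℂ) :
    (vecMulVec x (star y))ᴴ = vecMulVec y (star x) := by
  ext i j
  rw [Matrix.conjTranspose_apply, Matrix.vecMulVec_apply, Matrix.vecMulVec_apply]
  simp only [Pi.star_apply, star_mul', star_star]
  ring

lemma psd_vecMulVec (u : n → ℂ) : (vecMulVec u (star u)).PosSemidef := by
  rw [Matrix.vecMulVec_eq Unit, ← Matrix.conjTranspose_replicateCol]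
  exact Matrix.posSemidef_self_mul_conjTranspose _

lemma smul_vecMulVec (c : ℝ) (hc : 0 ≤ c) (u : n → ℂ) :
    ((c : ℂ)) • vecMulVec u (star u)
      = vecMulVec (((Real.sqrt c : ℝ) : ℂ) • u) (star (((Real.sqrt c : ℝ) : ℂ) • u)) := by
  ext i j
  rw [Matrix.smul_apply, Matrix.vecMulVec_apply, Matrix.vecMulVec_apply]
  simp only [Pi.smul_apply, Pi.star_apply, smul_eq_mul, star_mul', Complex.star_def,
    Complex.conj_ofReal]
  rw [show ∀ z₁ z₂ : ℂ, ((Real.sqrt c : ℝ) : ℂ) * z₁ * (((Real.sqrt c : ℝ) : ℂ) * z₂)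
      = (((Real.sqrt c * Real.sqrt c : ℝ)) : ℂ) * (z₁ * z₂) by intro z₁ z₂; push_cast; ring,
    Real.mul_self_sqrt hc]

lemma trace_vecMulVec (u : n → ℂ) :
    (vecMulVec u (star u)).trace = ((nsq u : ℝ) : ℂ) := by
  rw [Matrix.trace, nsq]
  push_cast
  refine Finset.sum_congr rfl fun i _ => ?_
  rw [Matrix.diag_apply, Matrix.vecMulVec_apply, Complex.normSq_eq_conj_mul_self]
  simp only [Pi.star_apply]
  rw [mul_comm]
  rfl

lemma msqrt_vecMulVec (u : n → ℂ) :
    msqrt (vecMulVec u (star u))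
      = ((((Real.sqrt (nsq u))⁻¹ : ℝ)) : ℂ) • vecMulVec u (star u) := by
  by_cases hu : u = 0
  · subst hu
    have h0 : vecMulVec (0 : n → ℂ) (star (0 : n → ℂ)) = 0 := by
      ext i j; simp [Matrix.vecMulVec_apply]
    rw [h0, smul_zero]
    exact msqrt_eq_of_sq Matrix.PosSemidef.zero Matrix.PosSemidef.zero (by rw [Matrix.mul_zero])
  · have hn : 0 < nsq u := by
      rcases lt_or_eq_of_le (nsq_nonneg u) with h | h
      · exact h
      · exact absurd (nsq_eq_zero h.symm) hu
    have hcnn : (0:ℝ) ≤ (Real.sqrt (nsq u))⁻¹ := inv_nonneg.mpr (Real.sqrt_nonneg _)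
    refine msqrt_eq_of_sq (psd_vecMulVec u) ?_ ?_
    · rw [_root_.smul_vecMulVec _ hcnn]
      exact psd_vecMulVec _
    · rw [Matrix.smul_mul, Matrix.mul_smul, _root_.vecMulVec_mul, star_dot_self, smul_smul, smul_smul]
      rw [show ((((Real.sqrt (nsq u))⁻¹ : ℝ)) : ℂ) * ((((Real.sqrt (nsq u))⁻¹ : ℝ)) : ℂ)
            * ((nsq u : ℝ) : ℂ)
          = ((((Real.sqrt (nsq u))⁻¹ * (Real.sqrt (nsq u))⁻¹ * nsq u : ℝ)) : ℂ) by push_cast; ring]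
      rw [show (Real.sqrt (nsq u))⁻¹ * (Real.sqrt (nsq u))⁻¹ * nsq u = 1 by
        rw [← Real.sqrt_mul_self (le_of_lt hn)]
        have : Real.sqrt (nsq u) ≠ 0 := by positivity
        field_simp
        rw [Real.sq_sqrt (Real.sqrt_nonneg _)]]
      rw [Complex.ofReal_one, one_smul]

lemma trace_msqrt_vecMulVec (u : n → ℂ) :
    (msqrt (vecMulVec u (star u))).trace = ((Real.sqrt (nsq u) : ℝ) : ℂ) := by
  rw [msqrt_vecMulVec, Matrix.trace_smul, _root_.trace_vecMulVec, smul_eq_mul]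
  rw [show ((((Real.sqrt (nsq u))⁻¹ : ℝ)) : ℂ) * ((nsq u : ℝ) : ℂ)
      = (((Real.sqrt (nsq u))⁻¹ * nsq u : ℝ) : ℂ) by push_cast; ring]
  congr 1
  by_cases h : nsq u = 0
  · rw [h, Real.sqrt_zero]; simp
  · have hn : 0 < nsq u := lt_of_le_of_ne (nsq_nonneg u) (Ne.symm h)
    have hs : Real.sqrt (nsq u) ≠ 0 := by positivity
    field_simp
    rw [Real.sq_sqrt hn.le]

lemma fidelity_pure (x y : n → ℂ) :
    fidelity (vecMulVec x (star x)) (vecMulVec y (star y))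
      = ‖star x ⬝ᵥ y‖ := by
  set cx : ℝ := (Real.sqrt (nsq x))⁻¹ with hcx
  set cy : ℝ := (Real.sqrt (nsq y))⁻¹ with hcy
  set z : ℂ := star x ⬝ᵥ y with hz
  have hM : msqrt (vecMulVec x (star x)) * msqrt (vecMulVec y (star y))
      = (((cx : ℂ)) * ((cy : ℂ)) * z) • vecMulVec x (star y) := by
    rw [msqrt_vecMulVec, msqrt_vecMulVec, Matrix.smul_mul, Matrix.mul_smul, _root_.vecMulVec_mul,
      ← hz, smul_smul, smul_smul]
  have hMMh : msqrt (vecMulVec x (star x)) * msqrt (vecMulVec y (star y))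
      * (msqrt (vecMulVec x (star x)) * msqrt (vecMulVec y (star y)))ᴴ
      = ((Complex.normSq ((cx : ℂ) * (cy : ℂ) * z) * nsq y : ℝ) : ℂ) • vecMulVec x (star x) := by
    rw [hM, Matrix.conjTranspose_smul, vecMulVec_conjTranspose, Matrix.smul_mul, Matrix.mul_smul,
      _root_.vecMulVec_mul, star_dot_self, smul_smul, smul_smul]
    congr 1
    push_cast
    rw [Complex.normSq_eq_conj_mul_self, starRingEnd_apply]
    ring
  rw [fidelity, traceNorm, hMMh]
  have hk : (0:ℝ) ≤ Complex.normSq ((cx : ℂ) * (cy : ℂ) * z) * nsq y :=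
    mul_nonneg (Complex.normSq_nonneg _) (nsq_nonneg y)
  rw [_root_.smul_vecMulVec _ hk, trace_msqrt_vecMulVec, nsq_smul, Complex.ofReal_re]
  rw [Real.mul_self_sqrt hk]
  have habs : ‖z‖ = Real.sqrt (Complex.normSq z) := Complex.norm_def z
  by_cases hz0 : z = 0
  · rw [hz0]
    simp
  · have hx : x ≠ 0 := fun h => hz0 (by rw [hz, h]; simp)
    have hy : y ≠ 0 := fun h => hz0 (by rw [hz, h]; simp)
    have hnx : 0 < nsq x := lt_of_le_of_ne (nsq_nonneg x) (fun h => hx (nsq_eq_zero h.symm))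
    have hny : 0 < nsq y := lt_of_le_of_ne (nsq_nonneg y) (fun h => hy (nsq_eq_zero h.symm))
    have h1 : Complex.normSq ((cx : ℂ) * (cy : ℂ) * z) * nsq y * nsq x = Complex.normSq z := by
      simp only [Complex.normSq_mul, Complex.normSq_ofReal]
      set sx := Real.sqrt (nsq x) with hsx
      set sy := Real.sqrt (nsq y) with hsy
      have hsx0 : sx ≠ 0 := by rw [hsx]; positivity
      have hsy0 : sy ≠ 0 := by rw [hsy]; positivity
      have hx2 : nsq x = sx * sx := (Real.mul_self_sqrt hnx.le).symm
      have hy2 : nsq y = sy * sy := (Real.mul_self_sqrt hny.le).symm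
      rw [hcx, hcy, hx2, hy2]
      field_simp
    rw [h1, habs]

end Rank1


section Chain
variable {m n : Type*} [Fintype m] [Fintype n] [DecidableEq m] [DecidableEq n]

open scoped MatrixOrder in
lemma msqrt_posSemidef {A : Matrix n n ℂ} (hA : A.PosSemidef) : (msqrt A).PosSemidef := by
  rw [msqrt_eq_sqrt hA]; exact (CFC.sqrt_nonneg A).posSemidef

open scoped MatrixOrder in
lemma msqrt_mul_self {A : Matrix n n ℂ} (hA : A.PosSemidef) : msqrt A * msqrt A = A := by
  rw [msqrt_eq_sqrt hA]; exact CFC.sqrt_mul_sqrt_self A hA.nonneg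

lemma fidelity_eq {a r₁ r₂ : Type*} [Fintype a] [Fintype r₁] [Fintype r₂]
    [DecidableEq a] [DecidableEq r₁] [DecidableEq r₂]
    {ρ1 ρ2 : Matrix a a ℂ} (hρ1 : ρ1.PosSemidef) (hρ2 : ρ2.PosSemidef)
    (M1 : Matrix a r₁ ℂ) (M2 : Matrix a r₂ ℂ) (h1 : ρ1 = M1 * M1ᴴ) (h2 : ρ2 = M2 * M2ᴴ) :
    fidelity ρ1 ρ2 = ((msqrt ((M2ᴴ * M1)ᴴ * (M2ᴴ * M1))).trace).re := by
  have hS1 := msqrt_posSemidef hρ1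
  have hS2 := msqrt_posSemidef hρ2
  have hS1h : (msqrt ρ1)ᴴ = msqrt ρ1 := hS1.1
  have hS2h : (msqrt ρ2)ᴴ = msqrt ρ2 := hS2.1
  have e1 : (msqrt ρ1 * msqrt ρ2)ᴴ * (msqrt ρ1 * msqrt ρ2)
      = (msqrt ρ2 * M1) * (msqrt ρ2 * M1)ᴴ := by
    rw [Matrix.conjTranspose_mul, hS1h, hS2h, Matrix.conjTranspose_mul, hS2h]
    calc msqrt ρ2 * msqrt ρ1 * (msqrt ρ1 * msqrt ρ2)
        = msqrt ρ2 * ((msqrt ρ1 * msqrt ρ1) * msqrt ρ2) := by simp only [Matrix.mul_assoc]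
      _ = msqrt ρ2 * ((M1 * M1ᴴ) * msqrt ρ2) := by rw [msqrt_mul_self hρ1, h1]
      _ = msqrt ρ2 * M1 * (M1ᴴ * msqrt ρ2) := by simp only [Matrix.mul_assoc]
  have e2 : (msqrt ρ2 * M1)ᴴ * (msqrt ρ2 * M1) = (M2ᴴ * M1)ᴴ * (M2ᴴ * M1) := by
    rw [Matrix.conjTranspose_mul, hS2h, Matrix.conjTranspose_mul,
      Matrix.conjTranspose_conjTranspose]
    calc M1ᴴ * msqrt ρ2 * (msqrt ρ2 * M1)
        = M1ᴴ * ((msqrt ρ2 * msqrt ρ2) * M1) := by simp only [Matrix.mul_assoc]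
      _ = M1ᴴ * ((M2 * M2ᴴ) * M1) := by rw [msqrt_mul_self hρ2, h2]
      _ = M1ᴴ * M2 * (M2ᴴ * M1) := by simp only [Matrix.mul_assoc]
  rw [fidelity, traceNorm, trace_msqrt_comm (msqrt ρ1 * msqrt ρ2), e1,
    trace_msqrt_comm (msqrt ρ2 * M1), e2]

end Chain

section Marg
variable {a r : Type*} [Fintype a] [Fintype r] [DecidableEq a] [DecidableEq r]

lemma margFst_pure (v : a × r → ℂ) (M : Matrix a r ℂ) (hM : ∀ i k, M i k = v (i, k)) :
    margFst (vecMulVec v (star v)) = M * Mᴴ := by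
  ext i j
  show (∑ l, vecMulVec v (star v) (i, l) (j, l)) = (M * Mᴴ) i j
  rw [Matrix.mul_apply]
  refine Finset.sum_congr rfl fun l _ => ?_
  rw [Matrix.vecMulVec_apply, Matrix.conjTranspose_apply, hM, hM]
  rfl

lemma trace_margFst (ρ' : Matrix (a × r) (a × r) ℂ) : (margFst ρ').trace = ρ'.trace := by
  rw [Matrix.trace, Matrix.trace, Fintype.sum_prod_type]
  rfl

lemma dot_eq_trace (v w : a × r → ℂ) (Mv Mw : Matrix a r ℂ)
    (hv : ∀ i k, Mv i k = v (i, k)) (hw : ∀ i k, Mw i k = w (i, k)) :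
    star v ⬝ᵥ w = (Mvᴴ * Mw).trace := by
  show (∑ p : a × r, star (v p) * w p) = _
  rw [Fintype.sum_prod_type, Finset.sum_comm, Matrix.trace]
  refine Finset.sum_congr rfl fun k _ => ?_
  rw [Matrix.diag_apply, Matrix.mul_apply]
  refine Finset.sum_congr rfl fun i _ => ?_
  rw [Matrix.conjTranspose_apply, hv, hw]

lemma mul_pure_mul {p q : Type*} [Fintype p] [Fintype q] [DecidableEq p] [DecidableEq q]
    (N : Matrix q p ℂ) (x : p → ℂ) :
    N * vecMulVec x (star x) * Nᴴ = vecMulVec (N *ᵥ x) (star (N *ᵥ x)) := by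
  ext i j
  rw [Matrix.mul_apply, Matrix.vecMulVec_apply]
  have hL : ∀ s, (N * vecMulVec x (star x)) i s = (N *ᵥ x) i * star (x s) := by
    intro s
    rw [Matrix.mul_apply]
    calc ∑ t, N i t * vecMulVec x (star x) t s
        = ∑ t, N i t * x t * star (x s) := by
          refine Finset.sum_congr rfl fun t _ => ?_
          rw [Matrix.vecMulVec_apply]
          simp only [Pi.star_apply]
          ring
      _ = (∑ t, N i t * x t) * star (x s) := by rw [Finset.sum_mul]
      _ = (N *ᵥ x) i * star (x s) := rfl
  have hR : star ((N *ᵥ x) j) = ∑ s, star (x s) * star (N j s) := by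
    show star (∑ s, N j s * x s) = _
    rw [star_sum]
    exact Finset.sum_congr rfl fun s _ => by rw [star_mul']; ring
  simp only [Pi.star_apply]
  rw [hR, Finset.mul_sum]
  refine Finset.sum_congr rfl fun s _ => ?_
  rw [hL s, Matrix.conjTranspose_apply]
  ring

lemma kron_mulVec {r₂ : Type*} [Fintype r₂] [DecidableEq r₂]
    (V : Matrix r₂ r ℂ) (v : a × r → ℂ) (M : Matrix a r ℂ) (hM : ∀ i k, M i k = v (i, k))
    (i : a) (l : r₂) :
    (((1 : Matrix a a ℂ) ⊗ₖ V) *ᵥ v) (i, l) = (M * Vᵀ) i l := by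
  show (∑ p : a × r, ((1 : Matrix a a ℂ) ⊗ₖ V) (i, l) p * v p) = _
  rw [Fintype.sum_prod_type]
  have hk : ∀ j k, ((1 : Matrix a a ℂ) ⊗ₖ V) (i, l) (j, k)
      = (1 : Matrix a a ℂ) i j * V l k := fun j k => rfl
  simp only [hk, Matrix.one_apply, ite_mul, one_mul, zero_mul]
  rw [Finset.sum_eq_single i (fun j _ hj => by
      rw [Finset.sum_eq_zero]
      intro k _
      rw [if_neg (Ne.symm hj)]) (fun h => absurd (Finset.mem_univ i) h)]
  rw [Matrix.mul_apply]
  refine Finset.sum_congr rfl fun k _ => ?_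
  rw [if_pos rfl, Matrix.transpose_apply, hM]
  ring

end Marg

/-- Uhlmann-type correspondence for sub-normalized states: given purifications
`ρ₁^{AR₁}`, `ρ₂^{AR₂}` of `ρ₁`, `ρ₂` with `dim R₁ ≤ dim R₂`, there exists a partial isometry
`V : R₁ → R₂` with `P(ρ₁, ρ₂) = P((I ⊗ V) ρ₁^{AR₁} (I ⊗ V)†, ρ₂^{AR₂})`. -/
theorem uhlmann_subnormalized {a r₁ r₂ : Type*}
    [Fintype a] [Fintype r₁] [Fintype r₂] [DecidableEq a] [DecidableEq r₁] [DecidableEq r₂]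
    (hdim : Fintype.card r₁ ≤ Fintype.card r₂)
    (ρ1 ρ2 : Matrix a a ℂ)
    (hρ1 : ρ1.PosSemidef) (hρ1t : ρ1.trace.re ≤ 1)
    (hρ2 : ρ2.PosSemidef) (hρ2t : ρ2.trace.re ≤ 1)
    (ρ1' : Matrix (a × r₁) (a × r₁) ℂ)
    (hpure1 : ∃ v : a × r₁ → ℂ, ρ1' = Matrix.vecMulVec v (star v))
    (hptr1 : margFst ρ1' = ρ1)
    (ρ2' : Matrix (a × r₂) (a × r₂) ℂ)
    (hpure2 : ∃ v : a × r₂ → ℂ, ρ2' = Matrix.vecMulVec v (star v))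
    (hptr2 : margFst ρ2' = ρ2) :
    ∃ V : Matrix r₂ r₁ ℂ, V * Vᴴ * V = V ∧
      pdist ρ1 ρ2
        = pdist ((((1 : Matrix a a ℂ) ⊗ₖ V) * ρ1') * ((1 : Matrix a a ℂ) ⊗ₖ V)ᴴ) ρ2' := by

  obtain ⟨v1, hv1⟩ := hpure1
  obtain ⟨v2, hv2⟩ := hpure2
  obtain ⟨M1, hM1⟩ : ∃ M : Matrix a r₁ ℂ, ∀ i k, M i k = v1 (i, k) :=
    ⟨Matrix.of fun i k => v1 (i, k), fun _ _ => rfl⟩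
  obtain ⟨M2, hM2⟩ : ∃ M : Matrix a r₂ ℂ, ∀ i k, M i k = v2 (i, k) :=
    ⟨Matrix.of fun i k => v2 (i, k), fun _ _ => rfl⟩
  have hρ1M : ρ1 = M1 * M1ᴴ := by rw [← hptr1, hv1]; exact margFst_pure v1 M1 hM1
  have hρ2M : ρ2 = M2 * M2ᴴ := by rw [← hptr2, hv2]; exact margFst_pure v2 M2 hM2
  obtain ⟨W, r, hr0, hWW, hsq1, hsq2, hWtr⟩ := svd_package (M2ᴴ * M1) hdim
  refine ⟨(Wᴴ)ᵀ, ?_, ?_⟩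
  · have hVh : ((Wᴴ)ᵀ)ᴴ = Wᵀ := by
      ext i j
      simp [Matrix.conjTranspose_apply, Matrix.transpose_apply]
    have h1 : ((Wᴴ)ᵀ)ᴴ * (Wᴴ)ᵀ = 1 := by
      rw [hVh, ← Matrix.transpose_mul, hWW, Matrix.transpose_one]
    rw [Matrix.mul_assoc, h1, Matrix.mul_one]
  · set V : Matrix r₂ r₁ ℂ := (Wᴴ)ᵀ with hV
    set w : a × r₂ → ℂ := ((1 : Matrix a a ℂ) ⊗ₖ V) *ᵥ v1 with hw
    have hT : ((1 : Matrix a a ℂ) ⊗ₖ V) * ρ1' * ((1 : Matrix a a ℂ) ⊗ₖ V)ᴴ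
        = vecMulVec w (star w) := by rw [hv1]; exact mul_pure_mul _ v1
    have hMw : ∀ i l, (M1 * Wᴴ) i l = w (i, l) := by
      intro i l
      rw [hw, kron_mulVec V v1 M1 hM1 i l, hV, Matrix.transpose_transpose]
    have hMwMwh : (M1 * Wᴴ) * (M1 * Wᴴ)ᴴ = ρ1 := by
      rw [Matrix.conjTranspose_mul, Matrix.conjTranspose_conjTranspose]
      calc M1 * Wᴴ * (W * M1ᴴ) = M1 * ((Wᴴ * W) * M1ᴴ) := by simp only [Matrix.mul_assoc]
        _ = M1 * M1ᴴ := by rw [hWW, Matrix.one_mul]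
        _ = ρ1 := hρ1M.symm
    have hnw : ((nsq w : ℝ) : ℂ) = ρ1.trace := by
      rw [← _root_.trace_vecMulVec w, ← trace_margFst (vecMulVec w (star w)),
        margFst_pure w (M1 * Wᴴ) hMw, hMwMwh]
    have hnv2 : ((nsq v2 : ℝ) : ℂ) = ρ2.trace := by
      rw [← _root_.trace_vecMulVec v2, ← trace_margFst (vecMulVec v2 (star v2)),
        margFst_pure v2 M2 hM2, ← hρ2M]
    have hnwre : nsq w = ρ1.trace.re := by
      have := congrArg Complex.re hnw
      simpa using this
    have hnv2re : nsq v2 = ρ2.trace.re := by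
      have := congrArg Complex.re hnv2
      simpa using this
    have hover : star v2 ⬝ᵥ w = ((r : ℝ) : ℂ) := by
      rw [dot_eq_trace v2 w M2 (M1 * Wᴴ) hM2 hMw, ← Matrix.mul_assoc, Matrix.trace_mul_comm]
      exact hWtr
    have hfid : fidelity ρ1 ρ2 = r := by
      rw [fidelity_eq hρ1 hρ2 M1 M2 hρ1M hρ2M, hsq2, Complex.ofReal_re]
    have habs : ‖star w ⬝ᵥ v2‖ = r := by
      rw [star_dotProduct, hover, Complex.star_def, Complex.conj_ofReal, Complex.norm_real, Real.norm_eq_abs,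
        abs_of_nonneg hr0]
    have hgen : genFid ρ1 ρ2
        = genFid (((1 : Matrix a a ℂ) ⊗ₖ V) * ρ1' * ((1 : Matrix a a ℂ) ⊗ₖ V)ᴴ) ρ2' := by
      rw [genFid, genFid, hT, hv2, fidelity_pure w v2, _root_.trace_vecMulVec w, _root_.trace_vecMulVec v2,
        hfid, habs, Complex.ofReal_re, Complex.ofReal_re, hnwre, hnv2re]
    rw [pdist, pdist, hgen]
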